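/- Let B = diag(k_1, k_1, k_2, k_2, …, k_z, k_z, 1, …, 1) be the d×d diagonal matrix and μ = Bγ ∈ ℂ^d (which is generic). Then g_R = span{L_m : m ∈ R} is a Lie subalgebra of g, R = Bℤ^d, and the linear map g_R → W_μ determined by L_{Bn} ↦ x^n ∂_μ for n ∈ ℤ^d is an isomorphism of Lie algebras. -/

import Mathlib

open scoped BigOperators

noncomputable section

/-- The index `2i-1` (1-based), i.e. `2i` (0-based). -/
def p1 {d z : ℕ} (h : 2*z ≤ d) (i : Fin z) : Fin d := ⟨2*(i:ℕ), by have := i.2; omega⟩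

/-- The index `2i` (1-based), i.e. `2i+1` (0-based). -/
def p2 {d z : ℕ} (h : 2*z ≤ d) (i : Fin z) : Fin d := ⟨2*(i:ℕ)+1, by have := i.2; omega⟩

/-- `σ(m,n) = ∏_i q_i^{n_{2i} m_{2i-1}}`. -/
def qsigma {d z : ℕ} (h : 2*z ≤ d) (q : Fin z → ℂ) (m n : Fin d → ℤ) : ℂ :=
  ∏ i : Fin z, q i ^ (n (p2 h i) * m (p1 h i))

/-- The subgroup `R = ⊕ (ℤ k_i e_{2i-1} ⊕ ℤ k_i e_{2i}) ⊕ ⊕_{l > 2z} ℤ e_l` of `ℤ^d`. -/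
def Rgrp {d z : ℕ} (h : 2*z ≤ d) (k : Fin z → ℕ) : AddSubgroup (Fin d → ℤ) where
  carrier := {m | ∀ i : Fin z, ((k i : ℤ) ∣ m (p1 h i)) ∧ ((k i : ℤ) ∣ m (p2 h i))}
  zero_mem' := fun i => ⟨dvd_zero _, dvd_zero _⟩
  add_mem' := fun ha hb i => ⟨dvd_add (ha i).1 (hb i).1, dvd_add (ha i).2 (hb i).2⟩
  neg_mem' := fun ha i => ⟨dvd_neg.mpr (ha i).1, dvd_neg.mpr (ha i).2⟩

/-- Membership in the set `Γ₀` of distinguished coset representatives for `ℤ^d/R`. -/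
def inGamma0 {d z : ℕ} (h : 2*z ≤ d) (k : Fin z → ℕ) (n : Fin d → ℤ) : Prop :=
  (∀ i : Fin z, 0 ≤ n (p1 h i) ∧ n (p1 h i) < k i ∧ 0 ≤ n (p2 h i) ∧ n (p2 h i) < k i) ∧
  ∀ l : Fin d, 2*z ≤ (l:ℕ) → n l = 0

/-- The representative in `Γ₀` of the coset `n + R`. -/
def repZ {d z : ℕ} (h : 2*z ≤ d) (k : Fin z → ℕ) (n : Fin d → ℤ) : Fin d → ℤ :=
  fun l => if hl : (l:ℕ) < 2*z then n l % (k ⟨(l:ℕ)/2, by omega⟩ : ℤ) else 0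

/-- `(γ|m) = ∑ γ_i m_i`. -/
def ginner {d : ℕ} (γ : Fin d → ℂ) (m : Fin d → ℤ) : ℂ := ∑ i, γ i * (m i : ℂ)

/-- The matrix `X^n = ⊗_i X_{2i-1}^{n_{2i-1}} X_{2i}^{n_{2i}} ∈ gl_N`, realized on the
index set `∏_i Fin (k_i)` (of cardinality `N = k_1 ⋯ k_z`). -/
def Xmat {d z : ℕ} (h : 2*z ≤ d) (k : Fin z → ℕ) (q : Fin z → ℂ) (n : Fin d → ℤ) :
    Matrix ((i : Fin z) → Fin (k i)) ((i : Fin z) → Fin (k i)) ℂ :=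
  Matrix.of fun j l => ∏ i : Fin z,
    (q i ^ (n (p1 h i) * (j i : ℤ)) *
      (if (l i : ℤ) = ((j i : ℤ) + n (p2 h i)) % (k i) then 1 else 0))

lemma repZ_mem {d z : ℕ} (h : 2*z ≤ d) (k : Fin z → ℕ) (hk : ∀ i, 0 < k i)
    (n : Fin d → ℤ) : inGamma0 h k (repZ h k n) := by
  constructor
  · intro i
    have h1 : ((p1 h i : ℕ)) < 2*z := by simp only [p1]; have := i.2; omega
    have h2 : ((p2 h i : ℕ)) < 2*z := by simp only [p2]; have := i.2; omega
    have e1 : (⟨((p1 h i : ℕ))/2, by omega⟩ : Fin z) = i := by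
      apply Fin.ext; simp only [p1]; omega
    have e2 : (⟨((p2 h i : ℕ))/2, by omega⟩ : Fin z) = i := by
      apply Fin.ext; simp only [p2]; omega
    have hk' : (0:ℤ) < (k i : ℤ) := by exact_mod_cast hk i
    refine ⟨?_, ?_, ?_, ?_⟩ <;> simp only [repZ, dif_pos h1, dif_pos h2, e1, e2]
    · exact Int.emod_nonneg _ (by exact_mod_cast (hk i).ne')
    · exact Int.emod_lt_of_pos _ hk'
    · exact Int.emod_nonneg _ (by exact_mod_cast (hk i).ne')
    · exact Int.emod_lt_of_pos _ hk'
  · intro l hl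
    simp only [repZ, dif_neg (by omega : ¬ (l:ℕ) < 2*z)]

/-- A family of operators is a weight module with uniformly bounded finite-dimensional
weight spaces (cuspidality), with respect to the Cartan operator `L0`. -/
def IsCuspidalFor {M : Type*} [AddCommGroup M] [Module ℂ M] (L0 : Module.End ℂ M) : Prop :=
  ((⨆ c : ℂ, Module.End.eigenspace L0 c) = ⊤) ∧
  (∀ c : ℂ, FiniteDimensional ℂ (Module.End.eigenspace L0 c)) ∧
  ∃ B : ℕ, ∀ c : ℂ, Module.finrank ℂ (Module.End.eigenspace L0 c) ≤ B

/-- The defining bracket relations of the solenoidal Lie algebra `g` over the rational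
quantum torus, for a family of operators `L` (i.e. `M` is a `g`-module). -/
def GRel {d z : ℕ} (h : 2*z ≤ d) (k : Fin z → ℕ) (q : Fin z → ℂ) (γ : Fin d → ℂ)
    {M : Type*} [AddCommGroup M] [Module ℂ M] (L : (Fin d → ℤ) → Module.End ℂ M) : Prop :=
  (∀ m n, m ∈ Rgrp h k → n ∈ Rgrp h k → ⁅L m, L n⁆ = (ginner γ (n - m)) • L (m + n)) ∧
  (∀ m s, m ∈ Rgrp h k → s ∉ Rgrp h k → ⁅L m, L s⁆ = (ginner γ s) • L (m + s)) ∧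
  (∀ r s, r ∉ Rgrp h k → s ∉ Rgrp h k →
    ⁅L r, L s⁆ = (qsigma h q r s - qsigma h q s r) • L (r + s))

/-- The relations making `(L, T)` a `Zg`-module structure: `Z` acts associatively and the
semidirect-product brackets `[L_m, t^n] = (γ|n) t^{m+n}`, `[L_r, t^n] = 0` hold. -/
def ZRel {d z : ℕ} (h : 2*z ≤ d) (k : Fin z → ℕ) (γ : Fin d → ℂ)
    {M : Type*} [AddCommGroup M] [Module ℂ M] (L T : (Fin d → ℤ) → Module.End ℂ M) : Prop :=
  (∀ m n, m ∈ Rgrp h k → n ∈ Rgrp h k → T m * T n = T (m + n)) ∧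
  (T 0 = 1) ∧
  (∀ m n, m ∈ Rgrp h k → n ∈ Rgrp h k → ⁅L m, T n⁆ = (ginner γ n) • T (m + n)) ∧
  (∀ r n, r ∉ Rgrp h k → n ∈ Rgrp h k → ⁅L r, T n⁆ = 0)

/-- `subE v i = v - e_i` (with truncated subtraction in `ℕ^d`). -/
def subE {d : ℕ} (v : Fin d → ℕ) (i : Fin d) : Fin d → ℕ :=
  Function.update v i (v i - 1)

lemma subE_ne {d : ℕ} {m n : Fin d → ℕ} (hm : m ≠ 0) (hn : n ≠ 0) (i : Fin d) :
    subE (m + n) i ≠ 0 := by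
  intro h
  obtain ⟨j, hj⟩ : ∃ j, m j ≠ 0 := by
    by_contra hc; push_neg at hc; exact hm (funext fun j => hc j)
  obtain ⟨j', hj'⟩ : ∃ j', n j' ≠ 0 := by
    by_contra hc; push_neg at hc; exact hn (funext fun j => hc j)
  by_cases hji : j = i
  · by_cases hj'i : j' = i
    · rw [hji] at hj; rw [hj'i] at hj'
      have := congrFun h i
      simp only [subE, Function.update_self, Pi.add_apply, Pi.zero_apply] at this
      omega
    · have := congrFun h j'
      simp only [subE, Function.update_of_ne hj'i, Pi.add_apply, Pi.zero_apply] at this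
      omega
  · have := congrFun h j
    simp only [subE, Function.update_of_ne hji, Pi.add_apply, Pi.zero_apply] at this
    omega

/-- The index `e_i ∈ ℕ^d ∖ {0}`. -/
def eIdx {d : ℕ} (i : Fin d) : {m : Fin d → ℕ // m ≠ 0} :=
  ⟨fun j => if j = i then 1 else 0, by
    intro h
    have := congrFun h i
    simp at this⟩

/-- The defining bracket relations of the Lie algebra `𝓛^x`, spanned by the basis
`{x^m d_γ : m ∈ ℕ^d, m ≠ 0}` with `[x^m d_γ, x^n d_γ] = ∑ γ_i (n_i - m_i) x^{m+n-e_i} d_γ`. -/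
def LxRel {d : ℕ} (γ : Fin d → ℂ) {Lx : Type*} [LieRing Lx] [LieAlgebra ℂ Lx]
    (b : Module.Basis {m : Fin d → ℕ // m ≠ 0} ℂ Lx) : Prop :=
  ∀ m n : {m : Fin d → ℕ // m ≠ 0},
    ⁅b m, b n⁆ = ∑ i : Fin d,
      (γ i * ((n.1 i : ℂ) - (m.1 i : ℂ))) • b ⟨subE (m.1 + n.1) i, subE_ne m.2 n.2 i⟩

/-- The diagonal matrix `B = diag(k₁,k₁,…,k_z,k_z,1,…,1)` acting on `ℤ^d`. -/
def Bfun {d z : ℕ} (h : 2*z ≤ d) (k : Fin z → ℕ) (n : Fin d → ℤ) : Fin d → ℤ :=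
  fun l => if hl : (l:ℕ) < 2*z then (k ⟨(l:ℕ)/2, by omega⟩ : ℤ) * n l else n l

/-- The vector `μ = Bγ ∈ ℂ^d`. -/
def Bmu {d z : ℕ} (h : 2*z ≤ d) (k : Fin z → ℕ) (γ : Fin d → ℂ) : Fin d → ℂ :=
  fun l => if hl : (l:ℕ) < 2*z then (k ⟨(l:ℕ)/2, by omega⟩ : ℂ) * γ l else γ l

lemma Bfun_mem {d z : ℕ} (h : 2*z ≤ d) (k : Fin z → ℕ) (n : Fin d → ℤ) :
    Bfun h k n ∈ Rgrp h k := by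
  intro i
  have h1 : ((p1 h i : ℕ)) < 2*z := by simp only [p1]; have := i.2; omega
  have h2 : ((p2 h i : ℕ)) < 2*z := by simp only [p2]; have := i.2; omega
  have e1 : (⟨((p1 h i : ℕ))/2, by omega⟩ : Fin z) = i := by
    apply Fin.ext; simp only [p1]; omega
  have e2 : (⟨((p2 h i : ℕ))/2, by omega⟩ : Fin z) = i := by
    apply Fin.ext; simp only [p2]; omega
  constructor <;> simp only [Bfun, dif_pos h1, dif_pos h2, e1, e2] <;>
    exact Dvd.intro _ rfl

section Helpers

variable {d z : ℕ}

lemma Bfun_add (h : 2*z ≤ d) (k : Fin z → ℕ) (m n : Fin d → ℤ) :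
    Bfun h k (m + n) = Bfun h k m + Bfun h k n := by
  funext l
  simp only [Bfun, Pi.add_apply]
  split <;> ring

lemma Bfun_sub (h : 2*z ≤ d) (k : Fin z → ℕ) (m n : Fin d → ℤ) :
    Bfun h k (m - n) = Bfun h k m - Bfun h k n := by
  funext l
  simp only [Bfun, Pi.sub_apply]
  split <;> ring

lemma ginner_Bfun (h : 2*z ≤ d) (k : Fin z → ℕ) (γ : Fin d → ℂ) (n : Fin d → ℤ) :
    ginner γ (Bfun h k n) = ginner (Bmu h k γ) n := by
  unfold ginner
  refine Finset.sum_congr rfl fun l _ => ?_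
  by_cases hl : (l:ℕ) < 2*z
  · simp only [Bfun, Bmu, dif_pos hl]
    push_cast
    ring
  · simp only [Bfun, Bmu, dif_neg hl]

lemma Bfun_inj (h : 2*z ≤ d) (k : Fin z → ℕ) (hk : ∀ i, 0 < k i) :
    Function.Injective (Bfun h k) := by
  intro m n hmn
  funext l
  have := congrFun hmn l
  simp only [Bfun] at this
  split at this
  · next hl =>
    have hk' : ((k ⟨(l:ℕ)/2, by omega⟩ : ℤ)) ≠ 0 := by
      exact_mod_cast (hk _).ne'
    exact mul_left_cancel₀ hk' this
  · exact this

lemma mem_Rgrp_iff (h : 2*z ≤ d) (k : Fin z → ℕ) (hk : ∀ i, 0 < k i) (m : Fin d → ℤ) :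
    m ∈ Rgrp h k ↔ ∃ n : Fin d → ℤ, m = Bfun h k n := by
  constructor
  · intro hm
    refine ⟨fun l => if hl : (l:ℕ) < 2*z then m l / (k ⟨(l:ℕ)/2, by omega⟩ : ℤ) else m l, ?_⟩
    funext l
    simp only [Bfun]
    split
    · next hl =>
      have hdvd : ((k ⟨(l:ℕ)/2, by omega⟩ : ℕ) : ℤ) ∣ m l := by
        rcases Nat.even_or_odd (l:ℕ) with he | ho
        · rw [Nat.even_iff] at he
          have hle : l = p1 h ⟨(l:ℕ)/2, by omega⟩ := by
            apply Fin.ext; show (l:ℕ) = 2 * ((l:ℕ)/2); omega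
          have hd1 := (hm ⟨(l:ℕ)/2, by omega⟩).1
          rwa [← hle] at hd1
        · rw [Nat.odd_iff] at ho
          have hle : l = p2 h ⟨(l:ℕ)/2, by omega⟩ := by
            apply Fin.ext; show (l:ℕ) = 2 * ((l:ℕ)/2) + 1; omega
          have hd2 := (hm ⟨(l:ℕ)/2, by omega⟩).2
          rwa [← hle] at hd2
      exact (Int.mul_ediv_cancel' hdvd).symm
    · rfl
  · rintro ⟨n, rfl⟩
    exact Bfun_mem h k n

end Helpers

/-- With `B = diag(k₁,k₁,…,k_z,k_z,1,…,1)` and `μ = Bγ` (which is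
generic), the span `g_R = span{L_m : m ∈ R}` is a Lie subalgebra of `g`, `R = Bℤ^d`,
and `L_{Bn} ↦ x^n ∂_μ` determines an isomorphism of Lie algebras `g_R ≅ W_μ`.  Here `g`
is presented by a basis `bL` satisfying its structure relations, and `W_μ` by a basis
`bW` with `[x^m ∂_μ, x^n ∂_μ] = (μ | n - m) x^{m+n} ∂_μ`. -/


theorem stmt19 (d z : ℕ) (hd : 0 < d) (hz : 0 < z) (h2z : 2*z ≤ d)
    (k : Fin z → ℕ) (hk : ∀ i, 0 < k i)
    (q : Fin z → ℂ) (hq : ∀ i, IsPrimitiveRoot (q i) (k i))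
    (hkdvd : ∀ (i : ℕ) (hi : i + 1 < z), k ⟨i+1, hi⟩ ∣ k ⟨i, by omega⟩)
    (γ : Fin d → ℂ) (hγ : LinearIndependent ℚ γ)
    -- `g` is the solenoidal Lie algebra over the rational quantum torus
    (g : Type*) [LieRing g] [LieAlgebra ℂ g]
    (bL : Module.Basis (Fin d → ℤ) ℂ g)
    (hg1 : ∀ m n, m ∈ Rgrp h2z k → n ∈ Rgrp h2z k →
      ⁅bL m, bL n⁆ = (ginner γ (n - m)) • bL (m + n))
    (hg2 : ∀ m s, m ∈ Rgrp h2z k → s ∉ Rgrp h2z k →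
      ⁅bL m, bL s⁆ = (ginner γ s) • bL (m + s))
    (hg3 : ∀ r s, r ∉ Rgrp h2z k → s ∉ Rgrp h2z k →
      ⁅bL r, bL s⁆ = (qsigma h2z q r s - qsigma h2z q s r) • bL (r + s))
    -- `W'` is the solenoidal Lie algebra `W_μ` with `μ = Bγ`
    (W' : Type*) [LieRing W'] [LieAlgebra ℂ W']
    (bW : Module.Basis (Fin d → ℤ) ℂ W')
    (hW : ∀ m n : Fin d → ℤ,
      ⁅bW m, bW n⁆ = (ginner (Bmu h2z k γ) (n - m)) • bW (m + n)) :
    -- `μ = Bγ` is generic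
    LinearIndependent ℚ (Bmu h2z k γ) ∧
    -- `R = Bℤ^d`
    (∀ m : Fin d → ℤ, m ∈ Rgrp h2z k ↔ ∃ n : Fin d → ℤ, m = Bfun h2z k n) ∧
    -- `g_R` is a Lie subalgebra and `L_{Bn} ↦ x^n ∂_μ` is a Lie algebra isomorphism
    ∃ hclosed : ∀ x ∈ Submodule.span ℂ (⇑bL '' ↑(Rgrp h2z k)),
        ∀ y ∈ Submodule.span ℂ (⇑bL '' ↑(Rgrp h2z k)),
        ⁅x, y⁆ ∈ Submodule.span ℂ (⇑bL '' ↑(Rgrp h2z k)),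
      ∃ φ : ↥(Submodule.span ℂ (⇑bL '' ↑(Rgrp h2z k))) ≃ₗ[ℂ] W',
        (∀ n : Fin d → ℤ,
          φ ⟨bL (Bfun h2z k n),
              Submodule.subset_span (Set.mem_image_of_mem _ (Bfun_mem h2z k n))⟩
            = bW n) ∧
        (∀ x y : ↥(Submodule.span ℂ (⇑bL '' ↑(Rgrp h2z k))),
          φ ⟨⁅x.1, y.1⁆, hclosed x.1 x.2 y.1 y.2⟩ = ⁅φ x, φ y⁆) := by
  have hRset : (↑(Rgrp h2z k) : Set (Fin d → ℤ)) = Set.range (Bfun h2z k) := by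
    ext m
    simpa [Set.mem_range, eq_comm] using mem_Rgrp_iff h2z k hk m
  set S := Submodule.span ℂ (⇑bL '' ↑(Rgrp h2z k)) with hS
  -- closure of the span under brackets
  have hclosed : ∀ x ∈ S, ∀ y ∈ S, ⁅x, y⁆ ∈ S := by
    intro x hx y hy
    refine Submodule.span_induction₂
      (p := fun x y _ _ => ⁅x, y⁆ ∈ S) ?_ ?_ ?_ ?_ ?_ ?_ ?_ hx hy
    · rintro _ _ ⟨a, ha, rfl⟩ ⟨b, hb, rfl⟩
      rw [hg1 a b ha hb]
      exact Submodule.smul_mem _ _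
        (Submodule.subset_span ⟨a + b, add_mem ha hb, rfl⟩)
    · intro y hy; rw [zero_lie]; exact zero_mem _
    · intro x hx; rw [lie_zero]; exact zero_mem _
    · intro a b c _ _ _ h1 h2; rw [add_lie]; exact add_mem h1 h2
    · intro a b c _ _ _ h1 h2; rw [lie_add]; exact add_mem h1 h2
    · intro r a b _ _ h1; rw [smul_lie]; exact Submodule.smul_mem _ _ h1
    · intro r a b _ _ h1; rw [lie_smul]; exact Submodule.smul_mem _ _ h1
  refine ⟨?_, fun m => mem_Rgrp_iff h2z k hk m, hclosed, ?_⟩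
  · -- genericity of μ = Bγ
    let w : Fin d → ℚˣ := fun l =>
      if hl : (l:ℕ) < 2*z then Units.mk0 (k ⟨(l:ℕ)/2, by omega⟩ : ℚ)
        (by exact_mod_cast (hk _).ne') else 1
    have heq : Bmu h2z k γ = w • γ := by
      funext l
      show Bmu h2z k γ l = (w l : ℚ) • γ l
      by_cases hl : (l:ℕ) < 2*z <;>
        simp [Bmu, w, hl, Rat.smul_def]
    rw [heq]
    exact hγ.units_smul w
  · -- the Lie algebra isomorphism
    set v : (Fin d → ℤ) → g := fun n => bL (Bfun h2z k n) with hv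
    have hli : LinearIndependent ℂ v :=
      bL.linearIndependent.comp _ (Bfun_inj h2z k hk)
    have hseq : S = Submodule.span ℂ (Set.range v) := by
      rw [hS, hRset, hv, ← Set.range_comp]
      rfl
    let e : S ≃ₗ[ℂ] Submodule.span ℂ (Set.range v) := LinearEquiv.ofEq _ _ hseq
    let b : Module.Basis (Fin d → ℤ) ℂ S := (Module.Basis.span hli).map e.symm
    have hb : ∀ n, (b n : g) = bL (Bfun h2z k n) := by
      intro n
      show ((e.symm (Module.Basis.span hli n) : S) : g) = _
      have : ((e.symm (Module.Basis.span hli n) : S) : g) = ((Module.Basis.span hli n : _) : g) := rfl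
      rw [this, Module.Basis.span_apply]
    let φ : S ≃ₗ[ℂ] W' := b.equiv bW (Equiv.refl _)
    have hφb : ∀ n, φ (b n) = bW n := fun n => by
      simp [φ, Module.Basis.equiv_apply]
    have hφ1 : ∀ n : Fin d → ℤ,
        φ ⟨bL (Bfun h2z k n),
            Submodule.subset_span (Set.mem_image_of_mem _ (Bfun_mem h2z k n))⟩
          = bW n := by
      intro n
      have : (⟨bL (Bfun h2z k n),
          Submodule.subset_span (Set.mem_image_of_mem _ (Bfun_mem h2z k n))⟩ : S) = b n :=
        Subtype.ext (hb n).symm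
      rw [this, hφb]
    refine ⟨φ, hφ1, ?_⟩
    · -- bracket preservation
      let F : S →ₗ[ℂ] S →ₗ[ℂ] W' := LinearMap.mk₂ ℂ
        (fun x y => φ ⟨⁅(x : g), (y : g)⁆, hclosed x.1 x.2 y.1 y.2⟩)
        (fun x x' y => by
          rw [← map_add]; exact congrArg φ (Subtype.ext (add_lie _ _ _)))
        (fun c x y => by
          rw [← map_smul]; exact congrArg φ (Subtype.ext (smul_lie _ _ _)))
        (fun x y y' => by
          rw [← map_add]; exact congrArg φ (Subtype.ext (lie_add _ _ _)))
        (fun c x y => by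
          rw [← map_smul]; exact congrArg φ (Subtype.ext (lie_smul _ _ _)))
      let G : S →ₗ[ℂ] S →ₗ[ℂ] W' := LinearMap.mk₂ ℂ
        (fun x y => ⁅φ x, φ y⁆)
        (fun x x' y => by rw [map_add, add_lie])
        (fun c x y => by rw [map_smul, smul_lie])
        (fun x y y' => by rw [map_add, lie_add])
        (fun c x y => by rw [map_smul, lie_smul])
      have hFG : F = G := by
        apply b.ext
        intro m
        apply b.ext
        intro n
        show φ ⟨⁅((b m : S) : g), ((b n : S) : g)⁆, _⟩ = ⁅φ (b m), φ (b n)⁆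
        have hbr : ⁅((b m : S) : g), ((b n : S) : g)⁆
            = (ginner (Bmu h2z k γ) (n - m)) • bL (Bfun h2z k (m + n)) := by
          rw [hb m, hb n, hg1 _ _ (Bfun_mem h2z k m) (Bfun_mem h2z k n),
            ← Bfun_sub, ginner_Bfun, ← Bfun_add]
        have hmem : (ginner (Bmu h2z k γ) (n - m)) • bL (Bfun h2z k (m + n)) ∈ S :=
          Submodule.smul_mem _ _
            (Submodule.subset_span (Set.mem_image_of_mem _ (Bfun_mem h2z k (m + n))))
        have h1 : (⟨⁅((b m : S) : g), ((b n : S) : g)⁆, hclosed _ (b m).2 _ (b n).2⟩ : S)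
            = (ginner (Bmu h2z k γ) (n - m)) •
              (⟨bL (Bfun h2z k (m + n)),
                Submodule.subset_span (Set.mem_image_of_mem _ (Bfun_mem h2z k (m + n)))⟩ : S) :=
          Subtype.ext hbr
        rw [h1, map_smul, hφ1, hφb, hφb, hW]
      intro x y
      exact LinearMap.congr_fun (LinearMap.congr_fun hFG x) y
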